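/- arXiv:1511.06521 — 3 statements merged into one kernel-verified Lean document; each statement's English description precedes it below -/
import Mathlib

section
/- Let α ≥ 1. The function g : [0,∞) → ℝ defined by g(t) = t²/(1+t) · (ln(1+t))^α is convex on [0,∞). -/
open Real Set

namespace Stmt1

noncomputable def f (α : ℝ) (t : ℝ) : ℝ := t ^ 2 / (1 + t) * Real.log (1 + t) ^ α

noncomputable def h (α : ℝ) (t : ℝ) : ℝ :=
  ((t ^ 2 + 2 * t) * Real.log (1 + t) + α * t ^ 2) / (1 + t) ^ 2

noncomputable def f1 (α : ℝ) (t : ℝ) : ℝ := Real.log (1 + t) ^ (α - 1) * h α t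

noncomputable def f2 (α : ℝ) (t : ℝ) : ℝ :=
  (α - 1) * Real.log (1 + t) ^ (α - 1 - 1) * (1 / (1 + t)) * h α t
    + Real.log (1 + t) ^ (α - 1) *
      ((2 * Real.log (1 + t) + t ^ 2 + 2 * t + 2 * α * t) / (1 + t) ^ 3)

lemma hasDerivAt_L {t : ℝ} (ht : -1 < t) :
    HasDerivAt (fun t : ℝ => Real.log (1 + t)) (1 / (1 + t)) t := by
  have h1 : HasDerivAt (fun t : ℝ => 1 + t) 1 t := (hasDerivAt_id t).const_add 1
  have := (Real.hasDerivAt_log (by linarith : (1 : ℝ) + t ≠ 0)).comp t h1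
  rw [one_div, ← mul_one (1 + t)⁻¹]; exact this

lemma hasDerivAt_u {t : ℝ} (ht : -1 < t) :
    HasDerivAt (fun t : ℝ => t ^ 2 / (1 + t)) ((t ^ 2 + 2 * t) / (1 + t) ^ 2) t := by
  have hne : (1 : ℝ) + t ≠ 0 := by linarith
  have h1 : HasDerivAt (fun t : ℝ => t ^ 2) (2 * t) t := by
    simpa using (hasDerivAt_pow 2 t)
  have h2 : HasDerivAt (fun t : ℝ => 1 + t) 1 t := (hasDerivAt_id t).const_add 1
  have := h1.div h2 hne
  refine this.congr_deriv ?_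
  field_simp
  ring

lemma hasDerivAt_v {α : ℝ} {t : ℝ} (ht : 0 < t) :
    HasDerivAt (fun t : ℝ => Real.log (1 + t) ^ α)
      (α * Real.log (1 + t) ^ (α - 1) * (1 / (1 + t))) t := by
  have hL : 0 < Real.log (1 + t) := Real.log_pos (by linarith)
  exact (Real.hasDerivAt_rpow_const (Or.inl hL.ne')).comp t (hasDerivAt_L (by linarith))

lemma hasDerivAt_f (α : ℝ) {t : ℝ} (ht : 0 < t) : HasDerivAt (f α) (f1 α t) t := by
  have hL : 0 < Real.log (1 + t) := Real.log_pos (by linarith)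
  have hne : (1 : ℝ) + t ≠ 0 := by linarith
  have := (hasDerivAt_u (by linarith : (-1:ℝ) < t)).mul (hasDerivAt_v (α := α) ht)
  refine this.congr_deriv ?_
  have hpow : Real.log (1 + t) ^ α = Real.log (1 + t) ^ (α - 1) * Real.log (1 + t) := by
    rw [← Real.rpow_add_one hL.ne' (α - 1)]; ring_nf
  rw [f1, h, hpow]
  field_simp

lemma hasDerivAt_h (α : ℝ) {t : ℝ} (ht : 0 < t) :
    HasDerivAt (h α) ((2 * Real.log (1 + t) + t ^ 2 + 2 * t + 2 * α * t) / (1 + t) ^ 3) t := by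
  have hne : (1 : ℝ) + t ≠ 0 := by linarith
  have hN : HasDerivAt (fun t : ℝ => (t ^ 2 + 2 * t) * Real.log (1 + t) + α * t ^ 2)
      ((2 * t + 2) * Real.log (1 + t) + (t ^ 2 + 2 * t) * (1 / (1 + t)) + α * (2 * t)) t := by
    have h1 : HasDerivAt (fun t : ℝ => t ^ 2 + 2 * t) (2 * t + 2) t := by
      have := (hasDerivAt_pow 2 t).add ((hasDerivAt_id t).const_mul 2)
      exact this.congr_deriv (by norm_num)
    have h2 := h1.mul (hasDerivAt_L (by linarith : (-1:ℝ) < t))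
    have h3 : HasDerivAt (fun t : ℝ => α * t ^ 2) (α * (2 * t)) t := by
      simpa using (hasDerivAt_pow 2 t).const_mul α
    exact h2.add h3
  have hD : HasDerivAt (fun t : ℝ => (1 + t) ^ 2) (2 * (1 + t)) t := by
    have := (hasDerivAt_pow 2 (1 + t)).comp t ((hasDerivAt_id t).const_add 1)
    exact this.congr_deriv (by norm_num)
  have := hN.div hD (by positivity)
  refine this.congr_deriv ?_
  field_simp
  ring

lemma hasDerivAt_f1 (α : ℝ) {t : ℝ} (ht : 0 < t) : HasDerivAt (f1 α) (f2 α t) t := by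
  have hL : 0 < Real.log (1 + t) := Real.log_pos (by linarith)
  have hv : HasDerivAt (fun t : ℝ => Real.log (1 + t) ^ (α - 1))
      ((α - 1) * Real.log (1 + t) ^ (α - 1 - 1) * (1 / (1 + t))) t := by
    exact (Real.hasDerivAt_rpow_const (Or.inl hL.ne')).comp t (hasDerivAt_L (by linarith))
  exact hv.mul (hasDerivAt_h α ht)

lemma f2_nonneg (α : ℝ) (hα : 1 ≤ α) {t : ℝ} (ht : 0 < t) : 0 ≤ f2 α t := by
  have hL : 0 < Real.log (1 + t) := Real.log_pos (by linarith)
  have hs : (0 : ℝ) < 1 + t := by linarith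
  have hh : 0 ≤ h α t := by
    apply div_nonneg _ (by positivity)
    have : 0 ≤ (t ^ 2 + 2 * t) * Real.log (1 + t) := by positivity
    nlinarith
  have h1 : 0 ≤ (α - 1) * Real.log (1 + t) ^ (α - 1 - 1) * (1 / (1 + t)) * h α t := by
    have := Real.rpow_nonneg hL.le (α - 1 - 1)
    have h11 : (0:ℝ) ≤ α - 1 := by linarith
    positivity
  have h2 : 0 ≤ Real.log (1 + t) ^ (α - 1) *
      ((2 * Real.log (1 + t) + t ^ 2 + 2 * t + 2 * α * t) / (1 + t) ^ 3) := by
    have := Real.rpow_nonneg hL.le (α - 1)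
    have : (0:ℝ) ≤ 2 * Real.log (1 + t) + t ^ 2 + 2 * t + 2 * α * t := by nlinarith
    positivity
  exact add_nonneg h1 h2

end Stmt1

/-- For `α ≥ 1`, the function `g(t) = t²/(1+t) · (log(1+t))^α` is convex on `[0,∞)`. -/
theorem stmt_1 (α : ℝ) (hα : 1 ≤ α) :
    ConvexOn ℝ (Set.Ici (0 : ℝ))
      (fun t : ℝ => t ^ 2 / (1 + t) * Real.log (1 + t) ^ α) := by
  have key : ∀ t ∈ interior (Set.Ici (0:ℝ)), HasDerivAt (deriv (Stmt1.f α)) (Stmt1.f2 α t) t := by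
    intro t ht
    rw [interior_Ici] at ht
    have hev : Stmt1.f1 α =ᶠ[nhds t] deriv (Stmt1.f α) := by
      filter_upwards [Ioi_mem_nhds ht] with x hx
      exact ((Stmt1.hasDerivAt_f α hx).deriv).symm
    exact (Stmt1.hasDerivAt_f1 α ht).congr_of_eventuallyEq hev.symm
  have hcont : ContinuousOn (Stmt1.f α) (Set.Ici 0) := by
    intro t ht
    have hs : (0:ℝ) < 1 + t := by simp at ht; linarith
    apply ContinuousWithinAt.mul
    · exact ((continuousAt_id.pow 2).div (continuousAt_const.add continuousAt_id)
        hs.ne').continuousWithinAt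
    · apply ContinuousAt.continuousWithinAt
      apply ContinuousAt.rpow _ continuousAt_const
      · right; linarith
      · exact (Real.continuousAt_log hs.ne').comp (continuousAt_const.add continuousAt_id)
  apply convexOn_of_deriv2_nonneg (convex_Ici 0) hcont
  · intro t ht
    rw [interior_Ici] at ht
    exact (Stmt1.hasDerivAt_f α ht).differentiableAt.differentiableWithinAt
  · intro t ht
    exact (key t ht).differentiableAt.differentiableWithinAt
  · intro t ht
    rw [interior_Ici] at ht
    have : deriv^[2] (Stmt1.f α) t = Stmt1.f2 α t := by
      simp only [Function.iterate_succ, Function.iterate_zero, Function.comp_apply, id]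
      exact (key t (by rwa [interior_Ici])).deriv
    rw [this]
    exact Stmt1.f2_nonneg α hα ht
end

section
/- Let Ω ⊂ ℝ³ be a bounded measurable set, and let (ρ_n) ⊂ L¹(Ω) be a sequence of measurable functions. Let P, G : ℝ → ℝ be continuous nondecreasing functions. Suppose P(ρ_n) ⇀ p̄, G(ρ_n) ⇀ ḡ, and P(ρ_n)G(ρ_n) ⇀ h̄ weakly in L¹(Ω). Then p̄(x)·ḡ(x) ≤ h̄(x) for a.e. x ∈ Ω. -/
open MeasureTheory Filter

/-- The "sup" case of the pointwise lemma. -/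
lemma stmt8_sup_case (P G : ℝ → ℝ) (hPm : Monotone P) (hGm : Monotone G) (p g h : ℝ)
    (H1 : ∀ c : ℝ, P c * g + G c * p - P c * G c ≤ h)
    (HP1 : ∀ b : ℝ, (∀ t, P t ≤ b) → p ≤ b)
    (HG1 : ∀ b : ℝ, (∀ t, G t ≤ b) → g ≤ b)
    (hp : ∀ c, P c < p) : p * g ≤ h := by
  by_cases hg : ∃ c₀, g ≤ G c₀
  · obtain ⟨c₀, hc₀⟩ := hg
    have h1 := H1 c₀
    have hprod : (p - P c₀) * (g - G c₀) ≤ 0 :=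
      mul_nonpos_of_nonneg_of_nonpos (by linarith [hp c₀]) (by linarith)
    nlinarith [hprod, h1]
  · push_neg at hg
    have hbP : BddAbove (Set.range P) := ⟨p, by rintro _ ⟨c, rfl⟩; exact (hp c).le⟩
    have hbG : BddAbove (Set.range G) := ⟨g, by rintro _ ⟨c, rfl⟩; exact (hg c).le⟩
    have hPlim : Tendsto P atTop (nhds p) := by
      have h1 : Tendsto P atTop (nhds (⨆ c, P c)) := tendsto_atTop_ciSup hPm hbP
      have he : (⨆ c, P c) = p := le_antisymm (ciSup_le fun c => (hp c).le)
        (HP1 _ (fun t => le_ciSup hbP t))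
      rwa [he] at h1
    have hGlim : Tendsto G atTop (nhds g) := by
      have h1 : Tendsto G atTop (nhds (⨆ c, G c)) := tendsto_atTop_ciSup hGm hbG
      have he : (⨆ c, G c) = g := le_antisymm (ciSup_le fun c => (hg c).le)
        (HG1 _ (fun t => le_ciSup hbG t))
      rwa [he] at h1
    have hT : Tendsto (fun c => (p - P c) * (g - G c)) atTop (nhds 0) := by
      have t1 : Tendsto (fun c => p - P c) atTop (nhds (p - p)) :=
        tendsto_const_nhds.sub hPlim
      have t2 : Tendsto (fun c => g - G c) atTop (nhds (g - g)) :=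
        tendsto_const_nhds.sub hGlim
      have := t1.mul t2
      simpa using this
    have hforall : ∀ c : ℝ, p * g - h ≤ (p - P c) * (g - G c) := by
      intro c
      have h1 := H1 c
      nlinarith [h1]
    have := ge_of_tendsto' hT hforall
    linarith

/-- The pointwise lemma: the monotonicity trick. -/
lemma stmt8_pointwise (P G : ℝ → ℝ) (hPc : Continuous P) (hPm : Monotone P)
    (hGm : Monotone G) (p g h : ℝ)
    (H1 : ∀ c : ℝ, P c * g + G c * p - P c * G c ≤ h)
    (HP1 : ∀ b : ℝ, (∀ t, P t ≤ b) → p ≤ b)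
    (HP2 : ∀ b : ℝ, (∀ t, b ≤ P t) → b ≤ p)
    (HG1 : ∀ b : ℝ, (∀ t, G t ≤ b) → g ≤ b)
    (HG2 : ∀ b : ℝ, (∀ t, b ≤ G t) → b ≤ g) : p * g ≤ h := by
  by_cases hA : ∃ c, P c = p
  · obtain ⟨c, hc⟩ := hA
    have h1 := H1 c
    rw [hc] at h1
    nlinarith [h1]
  · push_neg at hA
    by_cases h2 : ∃ a, P a < p
    · obtain ⟨a, ha⟩ := h2
      have hp : ∀ c, P c < p := by
        intro c
        rcases lt_or_gt_of_ne (hA c) with h' | h'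
        · exact h'
        · exfalso
          have : p ∈ Set.uIcc (P a) (P c) := by
            rw [Set.mem_uIcc]; left; exact ⟨ha.le, h'.le⟩
          obtain ⟨t, _, ht⟩ := intermediate_value_uIcc hPc.continuousOn this
          exact hA t ht
      exact stmt8_sup_case P G hPm hGm p g h H1 HP1 HG1 hp
    · push_neg at h2
      have hp : ∀ c, p < P c := fun c => lt_of_le_of_ne (h2 c) (Ne.symm (hA c))
      have key := stmt8_sup_case (fun t => -P (-t)) (fun t => -G (-t))
        (fun a b hab => by simpa using hPm (neg_le_neg hab))
        (fun a b hab => by simpa using hGm (neg_le_neg hab))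
        (-p) (-g) h
        (fun c => by
          show -P (-c) * -g + -G (-c) * -p - -P (-c) * -G (-c) ≤ h
          nlinarith [H1 (-c)])
        (fun b hb => by
          have : ∀ t, -b ≤ P t := fun t => by have := hb (-t); simp at this; linarith
          linarith [HP2 (-b) this])
        (fun b hb => by
          have : ∀ t, -b ≤ G t := fun t => by have := hb (-t); simp at this; linarith
          linarith [HG2 (-b) this])
        (fun c => by show -P (-c) < -p; simpa using hp (-c))
      nlinarith [key]

/-- Weak convergence against bounded measurable test functions gives convergence
of set integrals. -/
lemma stmt8_weak_to_set {α : Type*} [MeasurableSpace α] {μ : Measure α}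
    {F : ℕ → α → ℝ} {Fbar : α → ℝ}
    (hw : ∀ φ : α → ℝ, Measurable φ → (∃ M, ∀ x, |φ x| ≤ M) →
      Tendsto (fun n => ∫ x, F n x * φ x ∂μ) atTop (nhds (∫ x, Fbar x * φ x ∂μ)))
    (s : Set α) (hs : MeasurableSet s) :
    Tendsto (fun n => ∫ x in s, F n x ∂μ) atTop (nhds (∫ x in s, Fbar x ∂μ)) := by
  have key : ∀ f : α → ℝ,
      ∫ x, f x * s.indicator (fun _ => (1 : ℝ)) x ∂μ = ∫ x in s, f x ∂μ := by
    intro f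
    rw [← integral_indicator hs]
    congr 1; ext x; by_cases hx : x ∈ s <;> simp [hx]
  have h := hw (s.indicator fun _ => 1) (measurable_const.indicator hs)
    ⟨1, fun x => by by_cases hx : x ∈ s <;> simp [hx]⟩
  rw [key] at h
  exact h.congr fun n => key _

/-- If all the `f n` are nonnegative and their set integrals converge to those of
`fbar`, then `fbar` is a.e. nonnegative. -/
lemma stmt8_ae_nonneg {α : Type*} [MeasurableSpace α] {μ : Measure α} [IsFiniteMeasure μ]
    {f : ℕ → α → ℝ} {fbar : α → ℝ} (hfbar : Integrable fbar μ)
    (hw : ∀ s : Set α, MeasurableSet s →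
      Tendsto (fun n => ∫ x in s, f n x ∂μ) atTop (nhds (∫ x in s, fbar x ∂μ)))
    (hpos : ∀ n x, 0 ≤ f n x) : 0 ≤ᵐ[μ] fbar := by
  apply ae_nonneg_of_forall_setIntegral_nonneg hfbar
  intro s hs _
  exact ge_of_tendsto' (hw s hs) fun n => integral_nonneg fun x => hpos n x

/-- A pointwise upper bound passes to weak limits. -/
lemma stmt8_weak_le {α : Type*} [MeasurableSpace α] {μ : Measure α} [IsFiniteMeasure μ]
    {F : ℕ → α → ℝ} {Fbar : α → ℝ} (hFn : ∀ n, Integrable (F n) μ)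
    (hFbar : Integrable Fbar μ)
    (hw : ∀ s : Set α, MeasurableSet s →
      Tendsto (fun n => ∫ x in s, F n x ∂μ) atTop (nhds (∫ x in s, Fbar x ∂μ)))
    (b : ℝ) (hb : ∀ n x, F n x ≤ b) : ∀ᵐ x ∂μ, Fbar x ≤ b := by
  have h := stmt8_ae_nonneg (f := fun n x => b - F n x) (fbar := fun x => b - Fbar x)
    ((integrable_const b).sub hFbar) ?_ (fun n x => sub_nonneg.2 (hb n x))
  · filter_upwards [h] with x hx
    simp only [Pi.zero_apply] at hx
    linarith
  · intro s hs
    have e1 : ∀ n, ∫ x in s, (b - F n x) ∂μ = (μ s).toReal * b - ∫ x in s, F n x ∂μ := by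
      intro n
      rw [integral_sub (integrable_const b) ((hFn n).integrableOn), setIntegral_const,
        smul_eq_mul, measureReal_def]
    have e2 : ∫ x in s, (b - Fbar x) ∂μ = (μ s).toReal * b - ∫ x in s, Fbar x ∂μ := by
      rw [integral_sub (integrable_const b) hFbar.integrableOn, setIntegral_const,
        smul_eq_mul, measureReal_def]
    rw [e2]
    exact (tendsto_const_nhds.sub (hw s hs)).congr fun n => (e1 n).symm

/-- A pointwise lower bound passes to weak limits. -/
lemma stmt8_weak_ge {α : Type*} [MeasurableSpace α] {μ : Measure α} [IsFiniteMeasure μ]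
    {F : ℕ → α → ℝ} {Fbar : α → ℝ} (hFn : ∀ n, Integrable (F n) μ)
    (hFbar : Integrable Fbar μ)
    (hw : ∀ s : Set α, MeasurableSet s →
      Tendsto (fun n => ∫ x in s, F n x ∂μ) atTop (nhds (∫ x in s, Fbar x ∂μ)))
    (b : ℝ) (hb : ∀ n x, b ≤ F n x) : ∀ᵐ x ∂μ, b ≤ Fbar x := by
  have h := stmt8_weak_le (F := fun n x => -F n x) (Fbar := fun x => -Fbar x)
    (fun n => (hFn n).neg) hFbar.neg ?_ (-b) (fun n x => neg_le_neg (hb n x))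
  · filter_upwards [h] with x hx; linarith
  · intro s hs
    have := (hw s hs).neg
    simp only [← integral_neg] at this
    exact this

/-- Weak limits of products of monotone functions dominate the product of weak limits:
if `P(ρ_n) ⇀ p̄`, `G(ρ_n) ⇀ ḡ` and `P(ρ_n)G(ρ_n) ⇀ h̄` weakly in `L¹(Ω)` (i.e. tested
against bounded measurable functions), with `P, G` continuous and nondecreasing, then
`p̄ ḡ ≤ h̄` a.e. in `Ω`. -/
theorem stmt_8 (Ω : Set (EuclideanSpace ℝ (Fin 3)))
    (hΩm : MeasurableSet Ω) (hΩb : Bornology.IsBounded Ω)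
    (ρ : ℕ → EuclideanSpace ℝ (Fin 3) → ℝ)
    (hρ : ∀ n, Integrable (ρ n) (volume.restrict Ω))
    (P G : ℝ → ℝ) (hPc : Continuous P) (hPm : Monotone P)
    (hGc : Continuous G) (hGm : Monotone G)
    (pbar gbar hbar : EuclideanSpace ℝ (Fin 3) → ℝ)
    (hint : ∀ n, Integrable (fun x => P (ρ n x)) (volume.restrict Ω) ∧
        Integrable (fun x => G (ρ n x)) (volume.restrict Ω) ∧
        Integrable (fun x => P (ρ n x) * G (ρ n x)) (volume.restrict Ω))
    (hpbar : Integrable pbar (volume.restrict Ω))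
    (hgbar : Integrable gbar (volume.restrict Ω))
    (hhbar : Integrable hbar (volume.restrict Ω))
    (hPw : ∀ φ : EuclideanSpace ℝ (Fin 3) → ℝ, Measurable φ → (∃ M, ∀ x, |φ x| ≤ M) →
      Filter.Tendsto (fun n => ∫ x, P (ρ n x) * φ x ∂(volume.restrict Ω)) Filter.atTop
        (nhds (∫ x, pbar x * φ x ∂(volume.restrict Ω))))
    (hGw : ∀ φ : EuclideanSpace ℝ (Fin 3) → ℝ, Measurable φ → (∃ M, ∀ x, |φ x| ≤ M) →
      Filter.Tendsto (fun n => ∫ x, G (ρ n x) * φ x ∂(volume.restrict Ω)) Filter.atTop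
        (nhds (∫ x, gbar x * φ x ∂(volume.restrict Ω))))
    (hPGw : ∀ φ : EuclideanSpace ℝ (Fin 3) → ℝ, Measurable φ → (∃ M, ∀ x, |φ x| ≤ M) →
      Filter.Tendsto (fun n => ∫ x, P (ρ n x) * G (ρ n x) * φ x ∂(volume.restrict Ω))
        Filter.atTop (nhds (∫ x, hbar x * φ x ∂(volume.restrict Ω)))) :
    ∀ᵐ x ∂(volume.restrict Ω), pbar x * gbar x ≤ hbar x := by
  set μ := volume.restrict Ω with hμ
  haveI : IsFiniteMeasure μ := by
    constructor
    rw [hμ, Measure.restrict_apply_univ]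
    exact hΩb.measure_lt_top
  -- set-integral versions of the weak convergences
  have hPs := stmt8_weak_to_set (μ := μ) hPw
  have hGs := stmt8_weak_to_set (μ := μ) hGw
  have hPGs := stmt8_weak_to_set (μ := μ) (F := fun n x => P (ρ n x) * G (ρ n x)) hPGw
  -- Step 2 : for every real c, a.e. `P c * gbar + G c * pbar - P c * G c ≤ hbar`
  have hstep2 : ∀ c : ℝ, ∀ᵐ x ∂μ,
      0 ≤ hbar x - P c * gbar x - G c * pbar x + P c * G c := by
    intro c
    apply stmt8_ae_nonneg
      (f := fun n x => (P (ρ n x) - P c) * (G (ρ n x) - G c))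
    · exact ((hhbar.sub (hgbar.const_mul (P c))).sub (hpbar.const_mul (G c))).add
        (integrable_const _)
    · intro s hs
      have en : ∀ n, ∫ x in s, (P (ρ n x) - P c) * (G (ρ n x) - G c) ∂μ
          = (∫ x in s, P (ρ n x) * G (ρ n x) ∂μ) - P c * ∫ x in s, G (ρ n x) ∂μ
            - G c * ∫ x in s, P (ρ n x) ∂μ + (μ s).toReal * (P c * G c) := by
        intro n
        have i1 := (hint n).1.integrableOn (s := s)
        have i2 := (hint n).2.1.integrableOn (s := s)
        have i3 := (hint n).2.2.integrableOn (s := s)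
        have e : ∀ x, (P (ρ n x) - P c) * (G (ρ n x) - G c)
            = P (ρ n x) * G (ρ n x) - P c * G (ρ n x) - G c * P (ρ n x) + P c * G c :=
          fun x => by ring
        have k2 : Integrable (fun x => P (ρ n x) * G (ρ n x) - P c * G (ρ n x))
            (μ.restrict s) := i3.sub (i2.const_mul (P c))
        have k1 : Integrable
            (fun x => P (ρ n x) * G (ρ n x) - P c * G (ρ n x) - G c * P (ρ n x))
            (μ.restrict s) := k2.sub (i1.const_mul (G c))
        simp_rw [e]
        rw [integral_add k1 (integrable_const _), integral_sub k2 (i1.const_mul (G c)),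
          integral_sub i3 (i2.const_mul (P c)), integral_const_mul, integral_const_mul,
          setIntegral_const, smul_eq_mul, measureReal_def]
      have ebar : ∫ x in s, (hbar x - P c * gbar x - G c * pbar x + P c * G c) ∂μ
          = (∫ x in s, hbar x ∂μ) - P c * ∫ x in s, gbar x ∂μ
            - G c * ∫ x in s, pbar x ∂μ + (μ s).toReal * (P c * G c) := by
        have j1 := hpbar.integrableOn (s := s)
        have j2 := hgbar.integrableOn (s := s)
        have j3 := hhbar.integrableOn (s := s)
        have k2 : Integrable (fun x => hbar x - P c * gbar x) (μ.restrict s) :=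
          j3.sub (j2.const_mul (P c))
        have k1 : Integrable (fun x => hbar x - P c * gbar x - G c * pbar x)
            (μ.restrict s) := k2.sub (j1.const_mul (G c))
        rw [integral_add k1 (integrable_const _), integral_sub k2 (j1.const_mul (G c)),
          integral_sub j3 (j2.const_mul (P c)), integral_const_mul, integral_const_mul,
          setIntegral_const, smul_eq_mul, measureReal_def]
      rw [ebar]
      have T := (((hPGs s hs).sub ((hGs s hs).const_mul (P c))).sub
        ((hPs s hs).const_mul (G c))).add
        (tendsto_const_nhds (x := (μ s).toReal * (P c * G c)) (f := atTop))
      exact T.congr fun n => (en n).symm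
    · intro n x
      rcases le_total (ρ n x) c with h | h
      · nlinarith [sub_nonpos.2 (hPm h), sub_nonpos.2 (hGm h)]
      · exact mul_nonneg (sub_nonneg.2 (hPm h)) (sub_nonneg.2 (hGm h))
  -- Step 3 : rational bounds
  have hPub : ∀ q : ℚ, ∀ᵐ x ∂μ, (∀ t, P t ≤ (q : ℝ)) → pbar x ≤ q := by
    intro q
    by_cases hq : ∀ t, P t ≤ (q : ℝ)
    · filter_upwards [stmt8_weak_le (fun n => (hint n).1) hpbar hPs (q : ℝ)
        (fun n x => hq _)] with x hx _
      exact hx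
    · filter_upwards with x h
      exact absurd h hq
  have hPlb : ∀ q : ℚ, ∀ᵐ x ∂μ, (∀ t, (q : ℝ) ≤ P t) → (q : ℝ) ≤ pbar x := by
    intro q
    by_cases hq : ∀ t, (q : ℝ) ≤ P t
    · filter_upwards [stmt8_weak_ge (fun n => (hint n).1) hpbar hPs (q : ℝ)
        (fun n x => hq _)] with x hx _
      exact hx
    · filter_upwards with x h
      exact absurd h hq
  have hGub : ∀ q : ℚ, ∀ᵐ x ∂μ, (∀ t, G t ≤ (q : ℝ)) → gbar x ≤ q := by
    intro q
    by_cases hq : ∀ t, G t ≤ (q : ℝ)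
    · filter_upwards [stmt8_weak_le (fun n => (hint n).2.1) hgbar hGs (q : ℝ)
        (fun n x => hq _)] with x hx _
      exact hx
    · filter_upwards with x h
      exact absurd h hq
  have hGlb : ∀ q : ℚ, ∀ᵐ x ∂μ, (∀ t, (q : ℝ) ≤ G t) → (q : ℝ) ≤ gbar x := by
    intro q
    by_cases hq : ∀ t, (q : ℝ) ≤ G t
    · filter_upwards [stmt8_weak_ge (fun n => (hint n).2.1) hgbar hGs (q : ℝ)
        (fun n x => hq _)] with x hx _
      exact hx
    · filter_upwards with x h
      exact absurd h hq
  -- combine everything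
  have hst : ∀ᵐ x ∂μ, ∀ q : ℚ,
      0 ≤ hbar x - P q * gbar x - G q * pbar x + P q * G q :=
    ae_all_iff.2 fun q => hstep2 (q : ℝ)
  filter_upwards [hst, ae_all_iff.2 hPub, ae_all_iff.2 hPlb, ae_all_iff.2 hGub,
    ae_all_iff.2 hGlb] with x h1 h2 h3 h4 h5
  -- extend the rational inequality to all reals by continuity
  have H1 : ∀ c : ℝ, P c * gbar x + G c * pbar x - P c * G c ≤ hbar x := by
    have hcl : IsClosed {c : ℝ | P c * gbar x + G c * pbar x - P c * G c ≤ hbar x} :=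
      isClosed_le (((hPc.mul continuous_const).add (hGc.mul continuous_const)).sub
        (hPc.mul hGc)) continuous_const
    have hsub : Set.range ((↑) : ℚ → ℝ) ⊆
        {c : ℝ | P c * gbar x + G c * pbar x - P c * G c ≤ hbar x} := by
      rintro _ ⟨q, rfl⟩
      have := h1 q
      simp only [Set.mem_setOf_eq]
      linarith
    intro c
    have hc : c ∈ closure (Set.range ((↑) : ℚ → ℝ)) := by
      rw [Rat.denseRange_cast.closure_eq]; trivial
    exact (hcl.closure_subset_iff.2 hsub) hc
  apply stmt8_pointwise P G hPc hPm hGm (pbar x) (gbar x) (hbar x) H1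
  · intro b hb
    by_contra hlt
    push_neg at hlt
    obtain ⟨q, hq1, hq2⟩ := exists_rat_btwn hlt
    exact absurd (h2 q fun t => (hb t).trans hq1.le) (by linarith)
  · intro b hb
    by_contra hlt
    push_neg at hlt
    obtain ⟨q, hq1, hq2⟩ := exists_rat_btwn hlt
    exact absurd (h3 q fun t => hq2.le.trans (hb t)) (by linarith)
  · intro b hb
    by_contra hlt
    push_neg at hlt
    obtain ⟨q, hq1, hq2⟩ := exists_rat_btwn hlt
    exact absurd (h4 q fun t => (hb t).trans hq1.le) (by linarith)
  · intro b hb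
    by_contra hlt
    push_neg at hlt
    obtain ⟨q, hq1, hq2⟩ := exists_rat_btwn hlt
    exact absurd (h5 q fun t => hq2.le.trans (hb t)) (by linarith)
end

section
/- Let Ω ⊂ ℝ³ be a bounded domain with C² boundary, d(x) = dist(x, ∂Ω), x₀ ∈ ∂Ω, 0 < α < 1, and a = 2/(2−α). Define φ(x) = d(x)∇d(x)·(d(x) + |x−x₀|^a)^{−α} on a neighborhood of ∂Ω where d is C². Then the divergence of φ satisfies div φ(x) ≥ C₁ |∇d(x)|²/(d(x)+|x−x₀|^a)^α − C₂ for positive constants C₁, C₂ depending only on α and bounds for d in C²; in particular the fourth (negative) term −α²d²|∇|x−x₀|^a|²/(2(d+|x−x₀|^a)^{1+α}((1−α)d + |x−x₀|^a)) in the formula for div φ is dominated by the sum of the positive terms. -/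
open Real

lemma amgm_aux (e K k u : ℝ) (he : 0 < e) (hu0 : 0 ≤ u) (hk0 : 0 ≤ k) (hk : k ≤ K) :
    k * u ≤ e * (u * u) + K ^ 2 * (4 * e)⁻¹ := by
  have h4 : 0 < 4 * e := by linarith
  have hb : 4 * e * (4 * e)⁻¹ = 1 := mul_inv_cancel₀ (ne_of_gt h4)
  have hkk : k * k ≤ K * K := mul_self_le_mul_self hk0 hk
  have expand : (4 * e) * (K ^ 2 * (4 * e)⁻¹) = K ^ 2 := by
    rw [show (4 * e) * (K ^ 2 * (4 * e)⁻¹) = K ^ 2 * (4 * e * (4 * e)⁻¹) by ring, hb, mul_one]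
  have hmain : (4 * e) * (k * u) ≤ (4 * e) * (e * (u * u) + K ^ 2 * (4 * e)⁻¹) := by
    nlinarith [sq_nonneg (2 * e * u - k), hkk, expand]
  exact le_of_mul_le_mul_left hmain h4

lemma key_arith (α a M D r B G mP Δ : ℝ)
    (hα0 : 0 < α) (hα1 : α < 1) (hM : 0 < M) (ha : a * (2 - α) = 2)
    (hD0 : 0 ≤ D) (hDM : D ≤ M) (hG0 : 0 ≤ G)
    (hr : 0 < r) (hB : B = D + r ^ a)
    (hmP : |mP| ≤ a * r ^ (a - 1) * G) (hΔ : |Δ| ≤ 3 * M) :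
    (1 - α) / 2 * G ^ 2 / B ^ α - ((α * a) ^ 2 * (2 * (1 - α))⁻¹ + 3 * M * (M + 1)) ≤
      D * B ^ (-α) * Δ +
        (D * (-α * B ^ (-α - 1)) * G ^ 2 + D * (-α * B ^ (-α - 1)) * mP + B ^ (-α) * G ^ 2) := by
  have h2α : 0 < 2 - α := by linarith
  have ha0 : 0 < a := by nlinarith [ha, h2α]
  have hra : 0 < r ^ a := rpow_pos_of_pos hr a
  have hB0 : 0 < B := by rw [hB]; exact add_pos_of_nonneg_of_pos hD0 hra
  have hDB : D ≤ B := by rw [hB]; linarith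
  have hX0 : 0 < B ^ (-α - 1) := rpow_pos_of_pos hB0 _
  have e0 : (1 - α) / 2 * G ^ 2 / B ^ α = (1 - α) / 2 * (G ^ 2 * B ^ (-α)) := by
    rw [Real.rpow_neg hB0.le]; ring
  have e1 : B ^ (-α) = B * B ^ (-α - 1) := by
    have h := Real.rpow_add hB0 1 (-α - 1)
    rw [Real.rpow_one, show (1 : ℝ) + (-α - 1) = -α by ring] at h
    exact h
  -- (P1)
  have T1 : (1 - α) * (G ^ 2 * B ^ (-α)) ≤ B ^ (-α) * G ^ 2 + D * (-α * B ^ (-α - 1)) * G ^ 2 := by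
    rw [e1]
    nlinarith [mul_nonneg (mul_nonneg (sq_nonneg G) hX0.le) (mul_nonneg hα0.le (sub_nonneg.2 hDB))]
  -- (P2)
  set k : ℝ := α * a * (D * r ^ (a - 1) * B ^ (-(1 + α / 2))) with hk_def
  set u : ℝ := G * B ^ (-(α / 2)) with hu_def
  have hral : 0 ≤ r ^ (a - 1) := (rpow_pos_of_pos hr _).le
  have hq1 : 0 < B ^ (-(1 + α / 2)) := rpow_pos_of_pos hB0 _
  have hk0 : 0 ≤ k :=
    mul_nonneg (mul_nonneg hα0.le ha0.le) (mul_nonneg (mul_nonneg hD0 hral) hq1.le)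
  have hu0 : 0 ≤ u := mul_nonneg hG0 (rpow_pos_of_pos hB0 _).le
  have haa : a * (α / 2) = a - 1 := by linear_combination (-1 / 2 : ℝ) * ha
  have hr1 : r ^ (a - 1) = (r ^ a) ^ (α / 2) := by
    rw [← Real.rpow_mul hr.le, haa]
  have hq : 0 < B ^ (1 + α / 2) := rpow_pos_of_pos hB0 _
  have hDr : D * r ^ (a - 1) ≤ B ^ (1 + α / 2) := by
    have h3 : (r ^ a) ^ (α / 2) ≤ B ^ (α / 2) := by
      apply Real.rpow_le_rpow (rpow_nonneg hr.le a) (by rw [hB]; linarith) (by linarith)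
    have h5 : B ^ (1 + α / 2) = B * B ^ (α / 2) := by
      rw [Real.rpow_add hB0, Real.rpow_one]
    rw [hr1, h5]
    exact mul_le_mul hDB h3 (rpow_nonneg hra.le _) hB0.le
  have hk1 : D * r ^ (a - 1) * B ^ (-(1 + α / 2)) ≤ 1 := by
    rw [Real.rpow_neg hB0.le, ← div_eq_mul_inv, div_le_one hq]
    exact hDr
  have hk_le : k ≤ α * a := by
    calc k ≤ α * a * 1 := by
            exact mul_le_mul_of_nonneg_left hk1 (mul_nonneg hα0.le ha0.le)
      _ = α * a := by ring
  have eX : B ^ (-α - 1) = B ^ (-(1 + α / 2)) * B ^ (-(α / 2)) := by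
    rw [← Real.rpow_add hB0]; ring_nf
  have hlow : -(k * u) ≤ D * (-α * B ^ (-α - 1)) * mP := by
    apply neg_le_of_abs_le
    have habs : |D * (-α * B ^ (-α - 1)) * mP| = α * D * B ^ (-α - 1) * |mP| := by
      rw [abs_mul, abs_mul, abs_mul, abs_neg, abs_of_nonneg hD0, abs_of_nonneg hα0.le,
        abs_of_nonneg hX0.le]
      ring
    rw [habs]
    calc α * D * B ^ (-α - 1) * |mP| ≤ α * D * B ^ (-α - 1) * (a * r ^ (a - 1) * G) := by
          exact mul_le_mul_of_nonneg_left hmP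
            (mul_nonneg (mul_nonneg hα0.le hD0) hX0.le)
      _ = k * u := by rw [hk_def, hu_def, eX]; ring
  have amgm : k * u ≤ (1 - α) / 2 * (u * u) + (α * a) ^ 2 * (2 * (1 - α))⁻¹ := by
    have h := amgm_aux ((1 - α) / 2) (α * a) k u (by linarith) hu0 hk0 hk_le
    rwa [show (4 * ((1 - α) / 2) : ℝ) = 2 * (1 - α) by ring] at h
  have huu : u * u = G ^ 2 * B ^ (-α) := by
    have h1 : B ^ (-(α / 2)) * B ^ (-(α / 2)) = B ^ (-α) := by
      rw [← Real.rpow_add hB0]; ring_nf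
    calc u * u = G ^ 2 * (B ^ (-(α / 2)) * B ^ (-(α / 2))) := by rw [hu_def]; ring
      _ = G ^ 2 * B ^ (-α) := by rw [h1]
  have T2 : -((1 - α) / 2 * (G ^ 2 * B ^ (-α)) + (α * a) ^ 2 * (2 * (1 - α))⁻¹) ≤
      D * (-α * B ^ (-α - 1)) * mP := by
    rw [← huu]; linarith
  -- (P3)
  have hsD : D * B ^ (-α) ≤ M + 1 := by
    rcases eq_or_lt_of_le hD0 with h | h
    · rw [← h]; simp; linarith
    · have h1 : B ^ (-α) ≤ D ^ (-α) :=
        Real.rpow_le_rpow_of_nonpos h hDB (by linarith)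
      have h2 : D * B ^ (-α) ≤ D ^ (1 - α) := by
        calc D * B ^ (-α) ≤ D * D ^ (-α) :=
              mul_le_mul_of_nonneg_left h1 hD0
          _ = D ^ (1 - α) := by
              rw [show (1 : ℝ) - α = 1 + (-α) by ring, Real.rpow_add h, Real.rpow_one]
      rcases le_or_gt D 1 with hD1 | hD1
      · have := Real.rpow_le_one hD0 hD1 (by linarith : (0:ℝ) ≤ 1 - α)
        linarith
      · have h3 : D ^ (1 - α) ≤ D ^ (1 : ℝ) :=
          Real.rpow_le_rpow_of_exponent_le hD1.le (by linarith)
        rw [Real.rpow_one] at h3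
        linarith
  have T3 : -(3 * M * (M + 1)) ≤ D * B ^ (-α) * Δ := by
    apply neg_le_of_abs_le
    rw [abs_mul, abs_of_nonneg (mul_nonneg hD0 (rpow_pos_of_pos hB0 _).le)]
    calc D * B ^ (-α) * |Δ| ≤ (M + 1) * (3 * M) := by
          apply mul_le_mul hsD hΔ (abs_nonneg _) (by linarith)
      _ = 3 * M * (M + 1) := by ring
  rw [e0]
  linarith [T1, T2, T3]

lemma coord_abs_le_norm (v : EuclideanSpace ℝ (Fin 3)) (i : Fin 3) : |v i| ≤ ‖v‖ := by
  rw [← Real.sqrt_sq_eq_abs, EuclideanSpace.norm_eq]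
  apply Real.sqrt_le_sqrt
  have h : v i ^ 2 = ‖v i‖ ^ 2 := by rw [Real.norm_eq_abs, sq_abs]
  rw [h]
  exact Finset.single_le_sum (f := fun j => ‖v j‖ ^ 2) (fun j _ => sq_nonneg _) (Finset.mem_univ i)

lemma euclid_decomp (v : EuclideanSpace ℝ (Fin 3)) :
    ∑ i : Fin 3, v i • EuclideanSpace.single i (1 : ℝ) = v := by
  have h := (EuclideanSpace.basisFun (Fin 3) ℝ).sum_repr v
  simpa [EuclideanSpace.basisFun_apply, EuclideanSpace.basisFun_repr] using h


/-- Lower bound for the divergence of the boundary test function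
`φ(x) = d(x)∇d(x)(d(x)+|x−x₀|^a)^{−α}`, `a = 2/(2−α)`, `0 < α < 1`:
`div φ ≥ C₁ |∇d|²/(d+|x−x₀|^a)^α − C₂` with constants depending only on `α` and a
`C²` bound `M` for `d`. -/
theorem stmt_14 (α M : ℝ) (hα0 : 0 < α) (hα1 : α < 1) (hM : 0 < M) :
    ∃ C₁ C₂ : ℝ, 0 < C₁ ∧ 0 < C₂ ∧
      ∀ (d : EuclideanSpace ℝ (Fin 3) → ℝ) (U : Set (EuclideanSpace ℝ (Fin 3)))
        (x₀ : EuclideanSpace ℝ (Fin 3)),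
        IsOpen U → ContDiffOn ℝ 2 d U →
        (∀ x ∈ U, 0 ≤ d x) →
        (∀ x ∈ U, d x ≤ M ∧ ‖gradient d x‖ ≤ M ∧ ‖fderiv ℝ (gradient d) x‖ ≤ M) →
        x₀ ∈ closure U → d x₀ = 0 →
        ∀ x ∈ U, x ≠ x₀ →
          C₁ * ‖gradient d x‖ ^ 2 / (d x + ‖x - x₀‖ ^ (2 / (2 - α))) ^ α - C₂ ≤
            ∑ i : Fin 3,
              fderiv ℝ
                (fun y : EuclideanSpace ℝ (Fin 3) =>
                  (d y * (d y + ‖y - x₀‖ ^ (2 / (2 - α))) ^ (-α)) • gradient d y) x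
                (EuclideanSpace.single i 1) i := by
  have h2α : 0 < 2 - α := by linarith
  set a : ℝ := 2 / (2 - α) with ha_def
  have ha : a * (2 - α) = 2 := div_mul_cancel₀ 2 (ne_of_gt h2α)
  have ha0 : 0 < a := div_pos two_pos h2α
  refine ⟨(1 - α) / 2, (α * a) ^ 2 * (2 * (1 - α))⁻¹ + 3 * M * (M + 1), by linarith, ?_, ?_⟩
  · have h1 : 0 < (α * a) ^ 2 * (2 * (1 - α))⁻¹ :=
      mul_pos (pow_pos (mul_pos hα0 ha0) 2) (inv_pos.2 (by linarith))
    nlinarith [mul_pos hM hM]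
  intro d U x₀ hU hd2 hd0 hbnd _ _ x hx hxx
  have hUx : U ∈ nhds x := hU.mem_nhds hx
  have hne : x - x₀ ≠ 0 := sub_ne_zero.2 hxx
  have hr : 0 < ‖x - x₀‖ := norm_pos_iff.mpr hne
  have hdd : DifferentiableAt ℝ d x :=
    (hd2.contDiffAt hUx).differentiableAt (by norm_num)
  -- differentiability of the gradient
  have hfd' : DifferentiableAt ℝ (fderiv ℝ d) x := by
    have h := (hd2.contDiffAt hUx).fderiv_right (m := 1) (by norm_num)
    exact h.differentiableAt (by norm_num)
  have hgd : DifferentiableAt ℝ (gradient d) x := by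
    have : gradient d = fun y =>
        (InnerProductSpace.toDual ℝ (EuclideanSpace ℝ (Fin 3))).symm (fderiv ℝ d y) := rfl
    rw [this]
    exact ((InnerProductSpace.toDual ℝ
      (EuclideanSpace ℝ (Fin 3))).symm.differentiable.differentiableAt).comp x hfd'
  -- derivative of the norm factor
  have hnd : DifferentiableAt ℝ (fun y : EuclideanSpace ℝ (Fin 3) => ‖y - x₀‖) x :=
    (differentiableAt_fun_id.sub (differentiableAt_const x₀)).norm ℝ hne
  set N := fderiv ℝ (fun y : EuclideanSpace ℝ (Fin 3) => ‖y - x₀‖) x with hN_def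
  have hn : HasFDerivAt (fun y : EuclideanSpace ℝ (Fin 3) => ‖y - x₀‖) N x := hnd.hasFDerivAt
  have hNle : ‖N‖ ≤ 1 := by
    have hlip : LipschitzWith 1 (fun y : EuclideanSpace ℝ (Fin 3) => ‖y - x₀‖) := by
      apply LipschitzWith.of_dist_le_mul
      intro y z
      rw [NNReal.coe_one, one_mul, Real.dist_eq]
      calc |‖y - x₀‖ - ‖z - x₀‖| ≤ ‖(y - x₀) - (z - x₀)‖ := abs_norm_sub_norm_le _ _
        _ = dist y z := by rw [sub_sub_sub_cancel_right, dist_eq_norm]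
    simpa using norm_fderiv_le_of_lipschitz ℝ hlip
  have hp : HasFDerivAt (fun y : EuclideanSpace ℝ (Fin 3) => ‖y - x₀‖ ^ a)
      ((a * ‖x - x₀‖ ^ (a - 1)) • N) x := hn.rpow_const (Or.inl (ne_of_gt hr))
  have hB0 : 0 < d x + ‖x - x₀‖ ^ a :=
    add_pos_of_nonneg_of_pos (hd0 x hx) (Real.rpow_pos_of_pos hr a)
  have hBd : HasFDerivAt (fun y : EuclideanSpace ℝ (Fin 3) => d y + ‖y - x₀‖ ^ a)
      (fderiv ℝ d x + (a * ‖x - x₀‖ ^ (a - 1)) • N) x := hdd.hasFDerivAt.add hp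
  have hw : HasFDerivAt (fun y : EuclideanSpace ℝ (Fin 3) => (d y + ‖y - x₀‖ ^ a) ^ (-α))
      ((-α * (d x + ‖x - x₀‖ ^ a) ^ (-α - 1)) •
        (fderiv ℝ d x + (a * ‖x - x₀‖ ^ (a - 1)) • N)) x :=
    hBd.rpow_const (Or.inl (ne_of_gt hB0))
  set W : EuclideanSpace ℝ (Fin 3) →L[ℝ] ℝ :=
    (-α * (d x + ‖x - x₀‖ ^ a) ^ (-α - 1)) •
      (fderiv ℝ d x + (a * ‖x - x₀‖ ^ (a - 1)) • N) with hW_def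
  set Sder : EuclideanSpace ℝ (Fin 3) →L[ℝ] ℝ :=
    d x • W + ((d x + ‖x - x₀‖ ^ a) ^ (-α)) • fderiv ℝ d x with hSder_def
  have hs : HasFDerivAt (fun y : EuclideanSpace ℝ (Fin 3) =>
      d y * (d y + ‖y - x₀‖ ^ a) ^ (-α)) Sder x := hdd.hasFDerivAt.mul hw
  set F := fderiv ℝ (gradient d) x with hF_def
  set Φ : EuclideanSpace ℝ (Fin 3) →L[ℝ] EuclideanSpace ℝ (Fin 3) :=
    (d x * (d x + ‖x - x₀‖ ^ a) ^ (-α)) • F + Sder.smulRight (gradient d x) with hΦ_def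
  have hφ : HasFDerivAt (fun y : EuclideanSpace ℝ (Fin 3) =>
      (d y * (d y + ‖y - x₀‖ ^ a) ^ (-α)) • gradient d y) Φ x := hs.smul hgd.hasFDerivAt
  rw [hφ.fderiv]
  -- compute the sum of components
  have hcomp : ∀ i : Fin 3, Φ (EuclideanSpace.single i (1 : ℝ)) i =
      d x * (d x + ‖x - x₀‖ ^ a) ^ (-α) * (F (EuclideanSpace.single i (1 : ℝ)) i) +
        Sder (EuclideanSpace.single i (1 : ℝ)) * gradient d x i := by
    intro i
    rw [hΦ_def]
    simp [ContinuousLinearMap.add_apply, ContinuousLinearMap.smul_apply,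
      ContinuousLinearMap.smulRight_apply, PiLp.add_apply, PiLp.smul_apply, smul_eq_mul,
      mul_assoc]
  have hsum : ∑ i : Fin 3, Φ (EuclideanSpace.single i (1 : ℝ)) i =
      d x * (d x + ‖x - x₀‖ ^ a) ^ (-α) *
          (∑ i : Fin 3, F (EuclideanSpace.single i (1 : ℝ)) i) +
        Sder (gradient d x) := by
    rw [Finset.sum_congr rfl (fun i _ => hcomp i), Finset.sum_add_distrib, ← Finset.mul_sum]
    congr 1
    conv_rhs => rw [← euclid_decomp (gradient d x)]
    rw [map_sum]
    exact Finset.sum_congr rfl (fun i _ => by rw [map_smul, smul_eq_mul, mul_comm])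
  -- the quadratic term
  have hDdg : fderiv ℝ d x (gradient d x) = ‖gradient d x‖ ^ 2 := by
    have h2 : InnerProductSpace.toDual ℝ (EuclideanSpace ℝ (Fin 3)) (gradient d x) =
        fderiv ℝ d x := by
      exact (InnerProductSpace.toDual ℝ (EuclideanSpace ℝ (Fin 3))).apply_symm_apply _
    rw [← h2, InnerProductSpace.toDual_apply_apply, real_inner_self_eq_norm_sq]
  have hS : Sder (gradient d x) =
      d x * (-α * (d x + ‖x - x₀‖ ^ a) ^ (-α - 1)) * ‖gradient d x‖ ^ 2 +
        d x * (-α * (d x + ‖x - x₀‖ ^ a) ^ (-α - 1)) *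
          (((a * ‖x - x₀‖ ^ (a - 1)) • N) (gradient d x)) +
        (d x + ‖x - x₀‖ ^ a) ^ (-α) * ‖gradient d x‖ ^ 2 := by
    rw [hSder_def, hW_def]
    simp only [ContinuousLinearMap.add_apply, ContinuousLinearMap.smul_apply, smul_eq_mul, hDdg]
    ring
  rw [hsum, hS]
  -- bounds
  have hNg : |N (gradient d x)| ≤ ‖gradient d x‖ := by
    have h := N.le_opNorm (gradient d x)
    rw [Real.norm_eq_abs] at h
    calc |N (gradient d x)| ≤ ‖N‖ * ‖gradient d x‖ := h
      _ ≤ 1 * ‖gradient d x‖ := mul_le_mul_of_nonneg_right hNle (norm_nonneg _)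
      _ = ‖gradient d x‖ := one_mul _
  have hmP : |((a * ‖x - x₀‖ ^ (a - 1)) • N) (gradient d x)| ≤
      a * ‖x - x₀‖ ^ (a - 1) * ‖gradient d x‖ := by
    rw [ContinuousLinearMap.smul_apply, smul_eq_mul, abs_mul,
      abs_of_nonneg (mul_nonneg ha0.le (Real.rpow_pos_of_pos hr _).le)]
    exact mul_le_mul_of_nonneg_left hNg
      (mul_nonneg ha0.le (Real.rpow_pos_of_pos hr _).le)
  have hΔ : |∑ i : Fin 3, F (EuclideanSpace.single i (1 : ℝ)) i| ≤ 3 * M := by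
    calc |∑ i : Fin 3, F (EuclideanSpace.single i (1 : ℝ)) i|
        ≤ ∑ i : Fin 3, |F (EuclideanSpace.single i (1 : ℝ)) i| :=
          Finset.abs_sum_le_sum_abs _ _
      _ ≤ ∑ _i : Fin 3, M := by
          apply Finset.sum_le_sum
          intro i _
          calc |F (EuclideanSpace.single i (1 : ℝ)) i|
              ≤ ‖F (EuclideanSpace.single i (1 : ℝ))‖ := coord_abs_le_norm _ i
            _ ≤ ‖F‖ * ‖EuclideanSpace.single i (1 : ℝ)‖ := F.le_opNorm _
            _ = ‖F‖ := by rw [EuclideanSpace.norm_single, norm_one, mul_one]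
            _ ≤ M := (hbnd x hx).2.2
      _ = 3 * M := by simp
  exact key_arith α a M (d x) ‖x - x₀‖ (d x + ‖x - x₀‖ ^ a) ‖gradient d x‖
    (((a * ‖x - x₀‖ ^ (a - 1)) • N) (gradient d x))
    (∑ i : Fin 3, F (EuclideanSpace.single i (1 : ℝ)) i)
    hα0 hα1 hM ha (hd0 x hx) (hbnd x hx).1 (norm_nonneg _) hr rfl hmP hΔ
end
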